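/- arXiv:1903.01198 — 2 statements merged into one kernel-verified Lean document; each statement's English description precedes it below -/
import Mathlib

section
/- For all vertices i, j, the expected hitting time satisfies the spectral decomposition H_{ij} = 2|E| · ∑_{k=2}^{n} (1/(1−λ_k)) · ( v_{k,j}²/d_j − v_{k,i} v_{k,j} / √(d_i d_j) ). -/
open Finset Matrix

private lemma harmonic_nonpos {n : ℕ} (A : Matrix (Fin n) (Fin n) ℝ)
    (hsym : ∀ i j, A i j = A j i) (hnonneg : ∀ i j, 0 ≤ A i j)
    (d : Fin n → ℝ) (hd : ∀ i, d i = ∑ j, A i j) (hdpos : ∀ i, 0 < d i)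
    (hconn : (SimpleGraph.fromRel fun i j : Fin n => 0 < A i j).Connected)
    (j : Fin n) (u : Fin n → ℝ) (hj : u j = 0)
    (hharm : ∀ i, i ≠ j → u i = ∑ k, (A i k / d i) * u k) :
    ∀ i, u i ≤ 0 := by
  have hne : (univ : Finset (Fin n)).Nonempty := ⟨j, mem_univ j⟩
  set M := univ.sup' hne u with hM
  have hle : ∀ i, u i ≤ M := fun i => le_sup' u (mem_univ i)
  have step : ∀ a, a ≠ j → u a = M → ∀ k, 0 < A a k → u k = M := by
    intro a haj haM k hAk
    have hrow : ∑ m, A a m / d a = 1 := by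
      rw [← Finset.sum_div, ← hd]; exact div_self (hdpos a).ne'
    have h1 : ∑ m, (A a m / d a) * (M - u m) = 0 := by
      have h2 : ∑ m, (A a m / d a) * (M - u m)
          = (∑ m, A a m / d a) * M - ∑ m, (A a m / d a) * u m := by
        rw [Finset.sum_mul, ← Finset.sum_sub_distrib]
        exact Finset.sum_congr rfl fun m _ => by ring
      rw [h2, hrow, ← hharm a haj, haM]; ring
    have hterm : ∀ m ∈ univ, 0 ≤ (A a m / d a) * (M - u m) := fun m _ =>
      mul_nonneg (div_nonneg (hnonneg a m) (hdpos a).le) (by linarith [hle m])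
    have h3 := (Finset.sum_eq_zero_iff_of_nonneg hterm).mp h1 k (mem_univ k)
    have hpos : 0 < A a k / d a := div_pos hAk (hdpos a)
    rcases mul_eq_zero.mp h3 with h | h
    · exact absurd h hpos.ne'
    · linarith
  have key : ∀ a, ∀ _p : (SimpleGraph.fromRel fun i j : Fin n => 0 < A i j).Walk a j,
      u a = M → M = 0 := by
    intro a p
    induction p with
    | nil => intro h; rw [hj] at h; exact h.symm
    | @cons a b c hadj p ih =>
      intro ha
      by_cases hac : a = c
      · subst hac; rw [hj] at ha; exact ha.symm
      · have hab : 0 < A a b := by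
          rcases hadj with ⟨hne', h | h⟩
          · exact h
          · rw [hsym]; exact h
        exact ih hj hharm step (step a hac ha b hab)
  obtain ⟨i0, -, hi0⟩ := Finset.exists_mem_eq_sup' hne u
  have hM0 : M = 0 := key i0 (hconn.preconnected i0 j).some hi0.symm
  intro i; rw [← hM0]; exact hle i


/-- For all vertices `i, j`, the expected hitting time satisfies the
spectral decomposition
`H i j = 2|E| · ∑_{k=2}^{n} (1/(1−λ_k)) · ( v_{k,j}²/d_j − v_{k,i} v_{k,j} / √(d_i d_j) )`.
The hitting times are characterized by the first-step equations `H j j = 0` and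
`H i j = 1 + ∑ k, P i k * H k j` for `i ≠ j`, where `P i k = A i k / d i`. -/
theorem stmt_1
    (n : ℕ) (hn : 2 ≤ n)
    (A : Matrix (Fin n) (Fin n) ℝ)
    (hsym : ∀ i j, A i j = A j i)
    (hnonneg : ∀ i j, 0 ≤ A i j)
    (hdiag : ∀ i, A i i = 0)
    (d : Fin n → ℝ) (hd : ∀ i, d i = ∑ j, A i j)
    (hdpos : ∀ i, 0 < d i)
    (twoE : ℝ) (htwoE : twoE = ∑ i, d i)
    (B : Matrix (Fin n) (Fin n) ℝ)
    (hB : ∀ i j, B i j = A i j / (Real.sqrt (d i) * Real.sqrt (d j)))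
    (lam : Fin n → ℝ) (v : Fin n → Fin n → ℝ)
    (hmono : Antitone lam)
    (hlam1 : lam ⟨0, by omega⟩ = 1)
    (heig : ∀ k, B.mulVec (v k) = lam k • v k)
    (horth : ∀ k l, (∑ x, v k x * v l x) = (if k = l then (1 : ℝ) else 0))
    (hv1 : ∀ j, v ⟨0, by omega⟩ j = Real.sqrt (d j / twoE))
    (hgap : lam ⟨1, by omega⟩ < 1)
    (hconn : (SimpleGraph.fromRel fun i j : Fin n => 0 < A i j).Connected)
    (H : Fin n → Fin n → ℝ)
    (hH0 : ∀ j, H j j = 0)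
    (hHrec : ∀ i j, i ≠ j → H i j = 1 + ∑ k, (A i k / d i) * H k j) :
    ∀ i j, H i j = twoE * ∑ k ∈ Finset.univ.filter (fun k : Fin n => k.val ≠ 0),
      (1 / (1 - lam k)) * ((v k j) ^ 2 / d j - v k i * v k j / Real.sqrt (d i * d j)) := by
  have h0n : 0 < n := by omega
  set k0 : Fin n := ⟨0, by omega⟩ with hk0
  set S : Finset (Fin n) := Finset.univ.filter (fun k : Fin n => k.val ≠ 0) with hSdef
  set G : Fin n → Fin n → ℝ := fun i j => twoE * ∑ k ∈ S,
      (1 / (1 - lam k)) * ((v k j) ^ 2 / d j - v k i * v k j / Real.sqrt (d i * d j)) with hGdef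
  -- basic positivity facts
  have htwoEpos : 0 < twoE := by
    rw [htwoE]; exact Finset.sum_pos (fun i _ => hdpos i) ⟨k0, mem_univ k0⟩
  have hsq : ∀ i, Real.sqrt (d i) * Real.sqrt (d i) = d i :=
    fun i => Real.mul_self_sqrt (hdpos i).le
  have hsqpos : ∀ i, 0 < Real.sqrt (d i) := fun i => Real.sqrt_pos.mpr (hdpos i)
  have hSerase : S = Finset.univ.erase k0 := by
    ext k; simp [hSdef, hk0, Fin.ext_iff]
  -- lam k < 1 on S
  have hlamlt : ∀ k ∈ S, lam k < 1 := by
    intro k hk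
    have hk' : k.val ≠ 0 := by simpa [hSdef] using hk
    have h1k : (⟨1, by omega⟩ : Fin n) ≤ k := by
      change (1 : ℕ) ≤ k.val; omega
    exact lt_of_le_of_lt (hmono h1k) hgap
  -- column orthonormality
  have hcol : ∀ i j : Fin n, (∑ k, v k i * v k j) = (if i = j then (1:ℝ) else 0) := by
    intro i j
    set V : Matrix (Fin n) (Fin n) ℝ := Matrix.of v with hV
    have hVVt : V * Vᵀ = 1 := by
      ext k l
      simp only [Matrix.mul_apply, Matrix.transpose_apply, Matrix.one_apply, hV,
        Matrix.of_apply]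
      exact horth k l
    have hVtV : Vᵀ * V = 1 := mul_eq_one_comm.mp hVVt
    have := congrFun (congrFun hVtV i) j
    simpa [Matrix.mul_apply, Matrix.transpose_apply, Matrix.one_apply, hV,
      mul_comm] using this
  -- componentwise eigen relation
  have heig' : ∀ k i, ∑ m, B i m * v k m = lam k * v k i := by
    intro k i
    have := congrFun (heig k) i
    simpa [Matrix.mulVec, dotProduct, Pi.smul_apply, smul_eq_mul] using this
  -- row sums of P
  have hrow1 : ∀ i, ∑ m, A i m / d i = 1 := by
    intro i; rw [← Finset.sum_div, ← hd]; exact div_self (hdpos i).ne'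
  -- the S-sum of v k i * v k j  for i ≠ j
  have hSsum : ∀ i j : Fin n, i ≠ j →
      (∑ k ∈ S, v k i * v k j) = -(Real.sqrt (d i) * Real.sqrt (d j)) / twoE := by
    intro i j hij
    have h1 : v k0 i * v k0 j + ∑ k ∈ Finset.univ.erase k0, v k i * v k j
        = ∑ k, v k i * v k j :=
      Finset.add_sum_erase _ (fun k => v k i * v k j) (mem_univ k0)
    have h2 : (∑ k, v k i * v k j) = 0 := by rw [hcol i j, if_neg hij]
    have h3 : v k0 i * v k0 j = Real.sqrt (d i) * Real.sqrt (d j) / twoE := by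
      rw [hv1 i, hv1 j, Real.sqrt_div (hdpos i).le, Real.sqrt_div (hdpos j).le]
      have hE : Real.sqrt twoE * Real.sqrt twoE = twoE := Real.mul_self_sqrt htwoEpos.le
      rw [div_mul_div_comm, hE]
    rw [hSerase]
    rw [h2, h3] at h1
    field_simp at h1 ⊢
    linarith [h1]
  -- spectral transfer: ∑_m P i m * v k m / √(d m) = lam k * v k i / √(d i)
  have hX : ∀ k i, (∑ m, (A i m / d i) * v k m / Real.sqrt (d m))
      = lam k * v k i / Real.sqrt (d i) := by
    intro k i
    have e : ∀ m, (A i m / d i) * v k m / Real.sqrt (d m)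
        = B i m * v k m / Real.sqrt (d i) := by
      intro m
      rw [hB, ← hsq i]
      have h1 := (hsqpos i).ne'
      have h2 := (hsqpos m).ne'
      field_simp
      rw [Real.sqrt_sq (hsqpos i).le]; ring
    rw [Finset.sum_congr rfl (fun m _ => e m), ← Finset.sum_div, heig' k i]
  -- recurrence for G
  have hGrec : ∀ i j, i ≠ j → (∑ m, (A i m / d i) * G m j) = G i j - 1 := by
    intro i j hij
    have hsd : ∀ m : Fin n, Real.sqrt (d m * d j) = Real.sqrt (d m) * Real.sqrt (d j) :=
      fun m => Real.sqrt_mul (hdpos m).le _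
    have e1 : (∑ m, (A i m / d i) * G m j)
        = ∑ k ∈ S, ∑ m, (twoE * ((1/(1-lam k)) * (v k j ^ 2 / d j)) * (A i m / d i)
            - twoE * ((1/(1-lam k)) * (v k j / Real.sqrt (d j)))
              * ((A i m / d i) * v k m / Real.sqrt (d m))) := by
      rw [Finset.sum_comm]
      refine Finset.sum_congr rfl fun m _ => ?_
      simp only [hGdef, Finset.mul_sum]
      refine Finset.sum_congr rfl fun k _ => ?_
      rw [hsd m]
      ring
    have e2 : ∀ k ∈ S, (∑ m, (twoE * ((1/(1-lam k)) * (v k j ^ 2 / d j)) * (A i m / d i)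
            - twoE * ((1/(1-lam k)) * (v k j / Real.sqrt (d j)))
              * ((A i m / d i) * v k m / Real.sqrt (d m))))
        = twoE * ((1/(1-lam k)) * (v k j ^ 2 / d j - v k i * v k j / Real.sqrt (d i * d j)))
          + twoE * ((v k i * v k j) / (Real.sqrt (d i) * Real.sqrt (d j))) := by
      intro k hk
      have hlk : (1:ℝ) - lam k ≠ 0 := by have := hlamlt k hk; linarith
      have hsplit : (∑ m, (twoE * ((1/(1-lam k)) * (v k j ^ 2 / d j)) * (A i m / d i)
            - twoE * ((1/(1-lam k)) * (v k j / Real.sqrt (d j)))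
              * ((A i m / d i) * v k m / Real.sqrt (d m))))
          = twoE * ((1/(1-lam k)) * (v k j ^ 2 / d j)) * (∑ m, A i m / d i)
            - twoE * ((1/(1-lam k)) * (v k j / Real.sqrt (d j)))
              * (∑ m, (A i m / d i) * v k m / Real.sqrt (d m)) := by
        rw [Finset.mul_sum, Finset.mul_sum, ← Finset.sum_sub_distrib]
      rw [hsplit, hrow1 i, hX k i, Real.sqrt_mul (hdpos i).le]
      have hcl : (1/(1-lam k)) * lam k = 1/(1-lam k) - 1 := by
        field_simp
        ring
      linear_combination (-(twoE * v k i * v k j) / (Real.sqrt (d i) * Real.sqrt (d j))) * hcl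
    rw [e1, Finset.sum_congr rfl e2, Finset.sum_add_distrib]
    have e3 : (∑ k ∈ S, twoE * ((v k i * v k j) / (Real.sqrt (d i) * Real.sqrt (d j))))
        = -1 := by
      have e4 : ∀ k ∈ S, twoE * ((v k i * v k j) / (Real.sqrt (d i) * Real.sqrt (d j)))
          = (twoE / (Real.sqrt (d i) * Real.sqrt (d j))) * (v k i * v k j) :=
        fun k _ => by ring
      rw [Finset.sum_congr rfl e4, ← Finset.mul_sum, hSsum i j hij]
      have h1 := (hsqpos i).ne'
      have h2 := (hsqpos j).ne'
      field_simp
    rw [e3]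
    simp only [hGdef, Finset.mul_sum]
    ring
  -- G j j = 0
  have hGjj : ∀ j, G j j = 0 := by
    intro j
    simp only [hGdef]
    rw [Finset.sum_eq_zero, mul_zero]
    intro k _
    rw [Real.sqrt_mul_self (hdpos j).le]
    ring_nf
  -- conclude by uniqueness
  intro i j
  set u : Fin n → ℝ := fun a => H a j - G a j with hu
  have huj : u j = 0 := by simp [hu, hH0, hGjj]
  have hharm : ∀ a, a ≠ j → u a = ∑ k, (A a k / d a) * u k := by
    intro a ha
    have h1 := hHrec a j ha
    have h2 := hGrec a j ha
    have h3 : ∑ k, (A a k / d a) * u k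
        = (∑ k, (A a k / d a) * H k j) - ∑ k, (A a k / d a) * G k j := by
      rw [← Finset.sum_sub_distrib]
      exact Finset.sum_congr rfl fun k _ => by simp only [hu]; ring
    simp only [hu]
    rw [h3, h2, h1]
    ring
  have hle := harmonic_nonpos A hsym hnonneg d hd hdpos hconn j u huj hharm
  have hge := harmonic_nonpos A hsym hnonneg d hd hdpos hconn j (fun a => -(u a))
    (by simp [huj])
    (by
      intro a ha
      show -(u a) = ∑ k, (A a k / d a) * -(u k)
      rw [hharm a ha, ← Finset.sum_neg_distrib]
      exact Finset.sum_congr rfl fun k _ => by ring)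
  have h0 : u i = 0 := le_antisymm (hle i) (by simpa using hge i)
  have : H i j = G i j := by have := h0; simp only [hu] at this; linarith
  simpa [hGdef] using this
end

section
/- Fix d ≥ 2 and suppose p_n · n^{d−1} / (log n)⁴ → ∞. Then asymptotically almost surely, simultaneously for all vertices j, 2|Ẽ|/d_j = n(1 + o(1)); i.e., for every ε > 0, the probability that the hypergraph is connected and max_j |2|Ẽ|/d_j − n| ≤ ε n tends to 1 as n → ∞. -/
open MeasureTheory Filter

/-- The set of potential hyperedges of a `d`-uniform hypergraph on `Fin n`:
`d`-element subsets of the vertex set. -/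
abbrev HEdge (n d : ℕ) := {s : Finset (Fin n) // s.card = d}

/-- The weighted adjacency matrix (edge multiplicities) of the multigraph associated
with the hypergraph configuration `ω`: for `i ≠ j`, the number of hyperedges present
in `ω` containing both `i` and `j`; `0` on the diagonal. -/
noncomputable def adjCount (n d : ℕ) (ω : HEdge n d → Bool) (i j : Fin n) : ℝ :=
  if i = j then 0
  else ((Finset.univ.filter fun s : HEdge n d => ω s = true ∧ i ∈ s.1 ∧ j ∈ s.1).card : ℝ)

/-- The degree of the vertex `j` in the multigraph associated with `ω`. -/
noncomputable def deg (n d : ℕ) (ω : HEdge n d → Bool) (j : Fin n) : ℝ :=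
  ∑ i, adjCount n d ω j i

/-- Twice the number of multigraph edges: `2|Ẽ| = ∑_j d_j`. -/
noncomputable def twoEdges (n d : ℕ) (ω : HEdge n d → Bool) : ℝ :=
  ∑ j, deg n d ω j

/-- Connectedness of the (multi)graph associated with the hypergraph configuration `ω`. -/
def HConn (n d : ℕ) (ω : HEdge n d → Bool) : Prop :=
  (SimpleGraph.fromRel fun i j : Fin n => 0 < adjCount n d ω i j).Connected

/-- The normalized adjacency matrix `B = (a_{ij}/√(d_i d_j))`. -/
noncomputable def Bmat (n d : ℕ) (ω : HEdge n d → Bool) : Matrix (Fin n) (Fin n) ℝ :=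
  Matrix.of fun i j =>
    adjCount n d ω i j / (Real.sqrt (deg n d ω i) * Real.sqrt (deg n d ω j))

/-- The law of the random `d`-uniform hypergraph `H(n, p)`: each of the `C(n,d)`
potential hyperedges is present independently with probability `p`. -/
noncomputable def hyperMeasure (n d : ℕ) (p : ℝ) (hp : p ≤ 1) :
    Measure (HEdge n d → Bool) :=
  Measure.pi fun _ =>
    (PMF.bernoulli (Real.toNNReal p) (Real.toNNReal_le_one.mpr hp)).toMeasure

namespace S15
variable {n d : ℕ} {p : ℝ}

lemma cylinder (hp0 : 0 ≤ p) (hp1 : p ≤ 1) (S : Finset (HEdge n d)) (b : HEdge n d → Bool) :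
    hyperMeasure n d p hp1 {ω | ∀ e ∈ S, ω e = b e}
      = ∏ e ∈ S, ENNReal.ofReal (if b e then p else 1 - p) := by
  classical
  have hset : {ω : HEdge n d → Bool | ∀ e ∈ S, ω e = b e}
      = Set.univ.pi (fun e => if e ∈ S then ({b e} : Set Bool) else Set.univ) := by
    ext ω
    simp only [Set.mem_setOf_eq, Set.mem_pi, Set.mem_univ, forall_true_left]
    constructor
    · intro h e
      by_cases he : e ∈ S <;> simp [he, h e]
    · intro h e he
      have := h e; simp [he] at this; exact this
  rw [hyperMeasure, hset, Measure.pi_pi]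
  rw [← Finset.prod_subset (Finset.subset_univ S) (fun e _ he => by
    simp only [he, if_false]; exact measure_univ)]
  refine Finset.prod_congr rfl (fun e he => ?_)
  simp only [he, if_true]
  rw [PMF.toMeasure_apply_singleton _ _ (by exact MeasurableSet.of_discrete)]
  cases hb : b e
  · show (((1 - Real.toNNReal p : NNReal)) : ENNReal) = _
    rw [if_neg (by simp), ENNReal.coe_sub, ENNReal.coe_one]
    show (1 - ENNReal.ofReal p) = _
    rw [← ENNReal.ofReal_one, ← ENNReal.ofReal_sub _ hp0]
  · rfl
lemma pattern (hp0 : 0 ≤ p) (hp1 : p ≤ 1) (S T : Finset (HEdge n d)) (hT : T ⊆ S) :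
    hyperMeasure n d p hp1 {ω | ∀ e ∈ S, ω e = decide (e ∈ T)}
      = ENNReal.ofReal (p ^ T.card * (1 - p) ^ (S.card - T.card)) := by
  classical
  rw [cylinder hp0 hp1]
  rw [← Finset.prod_sdiff hT]
  have h1 : ∀ e ∈ S \ T, ENNReal.ofReal (if decide (e ∈ T) = true then p else 1 - p)
      = ENNReal.ofReal (1 - p) := by
    intro e he; rw [Finset.mem_sdiff] at he; simp [he.2]
  have h2 : ∀ e ∈ T, ENNReal.ofReal (if decide (e ∈ T) = true then p else 1 - p)
      = ENNReal.ofReal p := by intro e he; simp [he]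
  rw [Finset.prod_congr rfl h1, Finset.prod_congr rfl h2, Finset.prod_const, Finset.prod_const,
    Finset.card_sdiff_of_subset hT, ← ENNReal.ofReal_pow (by linarith), ← ENNReal.ofReal_pow hp0,
    ← ENNReal.ofReal_mul (pow_nonneg (by linarith : (0:ℝ) ≤ 1 - p) _), mul_comm]

lemma tail_le (hp0 : 0 ≤ p) (hp1 : p ≤ 1) (S : Finset (HEdge n d))
    (Q : Finset (HEdge n d) → Prop) [DecidablePred Q] :
    hyperMeasure n d p hp1 {ω | Q (S.filter fun e => ω e = true)}
      ≤ ∑ T ∈ S.powerset.filter Q, ENNReal.ofReal (p ^ T.card * (1 - p) ^ (S.card - T.card)) := by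
  classical
  have hsub : {ω : HEdge n d → Bool | Q (S.filter fun e => ω e = true)}
      ⊆ ⋃ T ∈ S.powerset.filter Q, {ω | ∀ e ∈ S, ω e = decide (e ∈ T)} := by
    intro ω hω
    have h1 : (S.filter fun e => ω e = true) ∈ S.powerset.filter Q := by
      simp only [Finset.mem_filter, Finset.mem_powerset]
      exact ⟨Finset.filter_subset _ _, hω⟩
    refine Set.mem_biUnion h1 ?_
    intro e he
    by_cases h : ω e = true <;> simp [Finset.mem_filter, he, h]
  calc hyperMeasure n d p hp1 {ω | Q (S.filter fun e => ω e = true)}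
      ≤ hyperMeasure n d p hp1 (⋃ T ∈ S.powerset.filter Q, {ω | ∀ e ∈ S, ω e = decide (e ∈ T)}) :=
        measure_mono hsub
    _ ≤ ∑ T ∈ S.powerset.filter Q, hyperMeasure n d p hp1 {ω | ∀ e ∈ S, ω e = decide (e ∈ T)} :=
        measure_biUnion_finset_le _ _
    _ = _ := by
        refine Finset.sum_congr rfl (fun T hT => ?_)
        rw [Finset.mem_filter, Finset.mem_powerset] at hT
        exact pattern hp0 hp1 S T hT.1

lemma sum_pow (x y : ℝ) (S : Finset (HEdge n d)) :
    ∑ T ∈ S.powerset, x ^ T.card * y ^ (S.card - T.card) = (x + y) ^ S.card := by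
  classical
  rw [← Finset.prod_const, Finset.prod_add]
  refine Finset.sum_congr rfl (fun T hT => ?_)
  rw [Finset.mem_powerset] at hT
  rw [Finset.prod_const, Finset.prod_const, Finset.card_sdiff_of_subset hT]

lemma chernoff_sum (hp0 : 0 ≤ p) (hp1 : p ≤ 1) (S : Finset (HEdge n d)) (θ lam : ℝ)
    (hlam : 0 < lam) (Q : Finset (HEdge n d) → Prop) [DecidablePred Q]
    (hQ : ∀ T ∈ S.powerset, Q T → 1 ≤ lam ^ ((T.card : ℝ) - θ)) :
    ∑ T ∈ S.powerset.filter Q, p ^ T.card * (1 - p) ^ (S.card - T.card)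
      ≤ lam ^ (-θ) * Real.exp (S.card * (p * (lam - 1))) := by
  classical
  have step1 : ∑ T ∈ S.powerset.filter Q, p ^ T.card * (1 - p) ^ (S.card - T.card)
      ≤ ∑ T ∈ S.powerset.filter Q,
        lam ^ (-θ) * ((lam * p) ^ T.card * (1 - p) ^ (S.card - T.card)) := by
    refine Finset.sum_le_sum (fun T hT => ?_)
    rw [Finset.mem_filter] at hT
    have h1 := hQ T hT.1 hT.2
    have hterm : (0:ℝ) ≤ p ^ T.card * (1 - p) ^ (S.card - T.card) :=
      mul_nonneg (pow_nonneg hp0 _) (pow_nonneg (by linarith) _)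
    calc p ^ T.card * (1 - p) ^ (S.card - T.card)
        ≤ lam ^ ((T.card : ℝ) - θ) * (p ^ T.card * (1 - p) ^ (S.card - T.card)) := by
          nlinarith [hterm]
      _ = lam ^ (-θ) * ((lam * p) ^ T.card * (1 - p) ^ (S.card - T.card)) := by
          rw [sub_eq_add_neg, Real.rpow_add hlam, Real.rpow_natCast, mul_pow]
          ring
  refine step1.trans ?_
  rw [← Finset.mul_sum]
  have hnn : (0:ℝ) ≤ lam ^ (-θ) := Real.rpow_nonneg hlam.le _
  refine mul_le_mul_of_nonneg_left ?_ hnn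
  have step2 : ∑ T ∈ S.powerset.filter Q, (lam * p) ^ T.card * (1 - p) ^ (S.card - T.card)
      ≤ ∑ T ∈ S.powerset, (lam * p) ^ T.card * (1 - p) ^ (S.card - T.card) := by
    refine Finset.sum_le_sum_of_subset_of_nonneg (Finset.filter_subset _ _) (fun T _ _ => ?_)
    exact mul_nonneg (pow_nonneg (by nlinarith) _) (pow_nonneg (by linarith) _)
  refine step2.trans ?_
  rw [sum_pow]
  have hb : lam * p + (1 - p) ≤ Real.exp (p * (lam - 1)) := by
    have := Real.add_one_le_exp (p * (lam - 1)); nlinarith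
  calc (lam * p + (1 - p)) ^ S.card ≤ Real.exp (p * (lam - 1)) ^ S.card := by
        refine pow_le_pow_left₀ (by nlinarith) hb _
    _ = Real.exp (S.card * (p * (lam - 1))) := by
        rw [← Real.exp_nat_mul]

lemma one_sub_inv_le_log (x : ℝ) (hx : 0 < x) : 1 - 1/x ≤ Real.log x := by
  have h := Real.log_le_sub_one_of_pos (show (0:ℝ) < 1/x by positivity)
  rw [one_div, Real.log_inv] at h
  rw [one_div]
  linarith

lemma expo_up (δ m : ℝ) (h0 : 0 < δ) (h2 : δ ≤ 1/2) (hm : 0 ≤ m) :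
    (1+δ/2) ^ (-((1+δ)*m)) * Real.exp (m*(δ/2)) ≤ Real.exp (-(δ^2*m/5)) := by
  have hpos : (0:ℝ) < 1+δ/2 := by linarith
  rw [Real.rpow_def_of_pos hpos, ← Real.exp_add, Real.exp_le_exp]
  set L := Real.log (1+δ/2) with hLdef
  have hlog : 1 - 1/(1+δ/2) ≤ L := one_sub_inv_le_log _ hpos
  have hL : δ/2 ≤ L * (1+δ/2) := by
    have h := mul_le_mul_of_nonneg_right hlog hpos.le
    have he : (1 - 1/(1+δ/2))*(1+δ/2) = δ/2 := by
      rw [sub_mul, one_mul, one_div, inv_mul_cancel₀ (ne_of_gt hpos)]; ring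
    linarith [he ▸ h]
  nlinarith [mul_le_mul_of_nonneg_left hL (mul_nonneg hm (by linarith : (0:ℝ) ≤ 1+δ)),
    mul_nonneg hm (sq_nonneg δ), mul_nonneg hm h0.le]

lemma expo_lo (δ m : ℝ) (h0 : 0 < δ) (h2 : δ ≤ 1/2) (hm : 0 ≤ m) :
    (1-δ/2) ^ (-((1-δ)*m)) * Real.exp (-(m*(δ/2))) ≤ Real.exp (-(δ^2*m/5)) := by
  have hpos : (0:ℝ) < 1-δ/2 := by linarith
  rw [Real.rpow_def_of_pos hpos, ← Real.exp_add, Real.exp_le_exp]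
  set L := Real.log (1-δ/2) with hLdef
  have hlog : 1 - 1/(1-δ/2) ≤ L := one_sub_inv_le_log _ hpos
  have hL : (-L) * (1-δ/2) ≤ δ/2 := by
    have h := mul_le_mul_of_nonneg_right hlog hpos.le
    have he : (1 - 1/(1-δ/2))*(1-δ/2) = -(δ/2) := by
      rw [sub_mul, one_mul, one_div, inv_mul_cancel₀ (ne_of_gt hpos)]; ring
    nlinarith [he ▸ h]
  nlinarith [mul_le_mul_of_nonneg_left hL (mul_nonneg hm (by linarith : (0:ℝ) ≤ 1-δ)),
    mul_nonneg hm (sq_nonneg δ), mul_nonneg hm h0.le,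
    mul_nonneg (mul_nonneg hm (sq_nonneg δ)) h0.le]

lemma measure_allfalse (hp0 : 0 ≤ p) (hp1 : p ≤ 1) (F : Finset (HEdge n d)) :
    hyperMeasure n d p hp1 {ω | ∀ e ∈ F, ω e = false}
      = ENNReal.ofReal ((1 - p) ^ F.card) := by
  rw [cylinder hp0 hp1 F (fun _ => false)]
  have : ∀ e ∈ F, ENNReal.ofReal (if (false : Bool) then p else 1 - p) = ENNReal.ofReal (1-p) := by
    intro e _; norm_num
  rw [Finset.prod_congr rfl this, Finset.prod_const, ← ENNReal.ofReal_pow (by linarith)]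

lemma measure_upper (hp0 : 0 ≤ p) (hp1 : p ≤ 1) (S : Finset (HEdge n d)) (δ : ℝ)
    (h0 : 0 < δ) (h2 : δ ≤ 1/2) :
    hyperMeasure n d p hp1
        {ω | (1+δ) * (S.card * p) ≤ ((S.filter fun e => ω e = true).card : ℝ)}
      ≤ ENNReal.ofReal (Real.exp (-(δ^2 * (S.card * p) / 5))) := by
  classical
  set m : ℝ := S.card * p with hmdef
  have hm : 0 ≤ m := mul_nonneg (Nat.cast_nonneg _) hp0
  have h := tail_le hp0 hp1 S (fun T => (1+δ)*m ≤ (T.card:ℝ))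
  refine h.trans ?_
  rw [← ENNReal.ofReal_sum_of_nonneg (fun T _ =>
    mul_nonneg (pow_nonneg hp0 _) (pow_nonneg (by linarith) _))]
  refine ENNReal.ofReal_le_ofReal ?_
  have hc := chernoff_sum hp0 hp1 S ((1+δ)*m) (1+δ/2) (by linarith)
    (fun T => (1+δ)*m ≤ (T.card:ℝ)) (fun T _ hQ => by
      calc (1:ℝ) = (1+δ/2) ^ (0:ℝ) := (Real.rpow_zero _).symm
        _ ≤ (1+δ/2) ^ ((T.card:ℝ) - (1+δ)*m) :=
          Real.rpow_le_rpow_of_exponent_le (by linarith) (by linarith))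
  refine hc.trans ?_
  have he : (S.card:ℝ) * (p * ((1+δ/2) - 1)) = m * (δ/2) := by rw [hmdef]; ring
  rw [he]
  exact expo_up δ m h0 h2 hm

lemma measure_lower (hp0 : 0 ≤ p) (hp1 : p ≤ 1) (S : Finset (HEdge n d)) (δ : ℝ)
    (h0 : 0 < δ) (h2 : δ ≤ 1/2) :
    hyperMeasure n d p hp1
        {ω | ((S.filter fun e => ω e = true).card : ℝ) ≤ (1-δ) * (S.card * p)}
      ≤ ENNReal.ofReal (Real.exp (-(δ^2 * (S.card * p) / 5))) := by
  classical
  set m : ℝ := S.card * p with hmdef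
  have hm : 0 ≤ m := mul_nonneg (Nat.cast_nonneg _) hp0
  have h := tail_le hp0 hp1 S (fun T => (T.card:ℝ) ≤ (1-δ)*m)
  refine h.trans ?_
  rw [← ENNReal.ofReal_sum_of_nonneg (fun T _ =>
    mul_nonneg (pow_nonneg hp0 _) (pow_nonneg (by linarith) _))]
  refine ENNReal.ofReal_le_ofReal ?_
  have hc := chernoff_sum hp0 hp1 S ((1-δ)*m) (1-δ/2) (by linarith)
    (fun T => (T.card:ℝ) ≤ (1-δ)*m) (fun T _ hQ => by
      calc (1:ℝ) = (1-δ/2) ^ (0:ℝ) := (Real.rpow_zero _).symm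
        _ ≤ (1-δ/2) ^ ((T.card:ℝ) - (1-δ)*m) :=
          Real.rpow_le_rpow_of_exponent_ge (by linarith) (by linarith) (by linarith))
  refine hc.trans ?_
  have he : (S.card:ℝ) * (p * ((1-δ/2) - 1)) = -(m * (δ/2)) := by rw [hmdef]; ring
  rw [he]
  exact expo_lo δ m h0 h2 hm


lemma card_edges_mem (hd : 1 ≤ d) (j : Fin n) :
    (Finset.univ.filter fun e : HEdge n d => j ∈ e.1).card = (n-1).choose (d-1) := by
  classical
  have h := Finset.card_bij'
    (i := fun (e : HEdge n d) (_ : e ∈ Finset.univ.filter fun e : HEdge n d => j ∈ e.1) =>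
      e.1.erase j)
    (j := fun (A : Finset (Fin n))
      (hA : A ∈ (Finset.univ.erase j).powersetCard (d-1)) =>
      (⟨insert j A, by
        rw [Finset.mem_powersetCard] at hA
        rw [Finset.card_insert_of_notMem (fun hj => (Finset.mem_erase.mp (hA.1 hj)).1 rfl), hA.2]
        omega⟩ : HEdge n d))
    ?_ ?_ ?_ ?_
  · rw [h, Finset.card_powersetCard, Finset.card_erase_of_mem (Finset.mem_univ j),
      Finset.card_univ, Fintype.card_fin]
  · intro e he
    rw [Finset.mem_filter] at he
    rw [Finset.mem_powersetCard]
    constructor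
    · intro x hx
      rw [Finset.mem_erase] at hx ⊢
      exact ⟨hx.1, Finset.mem_univ x⟩
    · rw [Finset.card_erase_of_mem he.2, e.2]
  · intro A hA
    simp only [Finset.mem_filter, Finset.mem_univ, true_and]
    exact Finset.mem_insert_self j A
  · intro e he
    rw [Finset.mem_filter] at he
    exact Subtype.ext (Finset.insert_erase he.2)
  · intro A hA
    rw [Finset.mem_powersetCard] at hA
    have hj : j ∉ A := fun hj => (Finset.mem_erase.mp (hA.1 hj)).1 rfl
    exact Finset.erase_insert hj

lemma crossing_card (hd : 2 ≤ d) (S : Finset (Fin n)) :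
    S.card * (n - S.card).choose (d-1)
      ≤ (Finset.univ.filter fun e : HEdge n d =>
          (∃ v ∈ e.1, v ∈ S) ∧ ∃ v ∈ e.1, v ∉ S).card := by
  classical
  set F := Finset.univ.filter fun e : HEdge n d =>
      (∃ v ∈ e.1, v ∈ S) ∧ ∃ v ∈ e.1, v ∉ S with hF
  have himg : F.card = (F.image Subtype.val).card :=
    (Finset.card_image_of_injective F Subtype.val_injective).symm
  rw [himg]
  have hcard : (S ×ˢ Sᶜ.powersetCard (d-1)).card = S.card * (n - S.card).choose (d-1) := by
    rw [Finset.card_product, Finset.card_powersetCard, Finset.card_compl, Fintype.card_fin]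
  rw [← hcard]
  refine Finset.card_le_card_of_injOn (fun va => insert va.1 va.2) ?_ ?_
  · rintro ⟨v, A⟩ hva
    rw [Finset.mem_coe, Finset.mem_product] at hva
    obtain ⟨hv, hA⟩ := hva
    rw [Finset.mem_powersetCard] at hA
    have hvA : v ∉ A := fun h => (Finset.mem_compl.mp (hA.1 h)) hv
    have hcard' : (insert v A).card = d := by
      rw [Finset.card_insert_of_notMem hvA, hA.2]; omega
    rw [Finset.mem_coe, Finset.mem_image]
    refine ⟨⟨insert v A, hcard'⟩, ?_, rfl⟩
    rw [hF, Finset.mem_filter]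
    refine ⟨Finset.mem_univ _, ⟨v, Finset.mem_insert_self _ _, hv⟩, ?_⟩
    have hA1 : A.Nonempty := by
      rw [← Finset.card_pos, hA.2]; omega
    obtain ⟨a, ha⟩ := hA1
    exact ⟨a, Finset.mem_insert_of_mem ha, Finset.mem_compl.mp (hA.1 ha)⟩
  · rintro ⟨v, A⟩ hva ⟨w, B⟩ hwb heq
    simp only [Finset.coe_product, Set.mem_prod, Finset.mem_coe, Finset.mem_powersetCard] at hva hwb
    have hvA : v ∉ A := fun h => (Finset.mem_compl.mp (hva.2.1 h)) hva.1
    have hwB : w ∉ B := fun h => (Finset.mem_compl.mp (hwb.2.1 h)) hwb.1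
    have hvw : v = w := by
      have heq' : insert v A = insert w B := heq
      have hw : w ∈ insert v A := heq' ▸ Finset.mem_insert_self w B
      rcases Finset.mem_insert.mp hw with h | h
      · exact h.symm
      · exact absurd hwb.1 (Finset.mem_compl.mp (hva.2.1 h))
    subst hvw
    have : A = B := by
      have heq' : insert v A = insert v B := heq
      have := congrArg (fun t => Finset.erase t v) heq'
      simpa [Finset.erase_insert hvA, Finset.erase_insert hwB] using this
    simp [this]

lemma deg_eq (hd : 1 ≤ d) (ω : HEdge n d → Bool) (j : Fin n) :
    deg n d ω j = ((d:ℝ) - 1) *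
      ((Finset.univ.filter fun e : HEdge n d => ω e = true ∧ j ∈ e.1).card : ℝ) := by
  classical
  have hadj : ∀ i : Fin n, adjCount n d ω j i
      = ∑ e : HEdge n d, (if ω e = true ∧ j ∈ e.1 then
          (if i ∈ e.1.erase j then (1:ℝ) else 0) else 0) := by
    intro i
    by_cases hji : j = i
    · subst hji
      rw [adjCount, if_pos rfl]
      symm
      refine Finset.sum_eq_zero (fun e _ => ?_)
      by_cases h : ω e = true ∧ j ∈ e.1
      · rw [if_pos h, if_neg (by simp)]
      · rw [if_neg h]
    · rw [adjCount, if_neg hji, Finset.card_filter]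
      rw [Nat.cast_sum]
      refine Finset.sum_congr rfl (fun e _ => ?_)
      by_cases h1 : ω e = true
      · by_cases h2 : j ∈ e.1
        · by_cases h3 : i ∈ e.1
          · rw [if_pos ⟨h1, h2, h3⟩, if_pos ⟨h1, h2⟩,
              if_pos (Finset.mem_erase.mpr ⟨fun h => hji h.symm, h3⟩)]
            norm_num
          · rw [if_neg (by tauto), if_pos ⟨h1, h2⟩,
              if_neg (fun h => h3 (Finset.mem_of_mem_erase h))]
            norm_num
        · rw [if_neg (by tauto), if_neg (by tauto)]; norm_num
      · rw [if_neg (by tauto), if_neg (by tauto)]; norm_num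
  rw [deg]
  simp_rw [hadj]
  rw [Finset.sum_comm]
  have hinner : ∀ e : HEdge n d,
      (∑ i : Fin n, if ω e = true ∧ j ∈ e.1 then
          (if i ∈ e.1.erase j then (1:ℝ) else 0) else 0)
        = if ω e = true ∧ j ∈ e.1 then ((d:ℝ) - 1) else 0 := by
    intro e
    by_cases h : ω e = true ∧ j ∈ e.1
    · simp only [if_pos h]
      rw [Finset.sum_ite_mem, Finset.univ_inter, Finset.sum_const, nsmul_eq_mul, mul_one,
        Finset.card_erase_of_mem h.2, e.2]
      have : (1:ℕ) ≤ d := hd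
      push_cast [Nat.cast_sub this]
      ring
    · simp only [if_neg h]
      exact Finset.sum_const_zero
  simp_rw [hinner]
  rw [← Finset.sum_filter, Finset.sum_const, nsmul_eq_mul]
  ring

lemma disconn_struct (hn : 1 ≤ n) (ω : HEdge n d → Bool) (h : ¬ HConn n d ω) :
    ∃ S : Finset (Fin n), S.Nonempty ∧ 2 * S.card ≤ n ∧
      ∀ e : HEdge n d, ω e = true → ¬((∃ v ∈ e.1, v ∈ S) ∧ ∃ v ∈ e.1, v ∉ S) := by
  classical
  have hne : Nonempty (Fin n) := ⟨⟨0, hn⟩⟩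
  rw [HConn, SimpleGraph.connected_iff] at h
  have hpre : ¬ (SimpleGraph.fromRel fun i j : Fin n =>
      0 < adjCount n d ω i j).Preconnected := fun hp => h ⟨hp, hne⟩
  simp only [SimpleGraph.Preconnected] at hpre
  push_neg at hpre
  obtain ⟨u, v, huv⟩ := hpre
  set G := SimpleGraph.fromRel fun i j : Fin n => 0 < adjCount n d ω i j with hG
  set S₀ := Finset.univ.filter fun w => G.Reachable u w with hS₀
  have hu : u ∈ S₀ := by
    rw [hS₀, Finset.mem_filter]; exact ⟨Finset.mem_univ _, SimpleGraph.Reachable.refl u⟩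
  have hv : v ∉ S₀ := by
    rw [hS₀, Finset.mem_filter]; tauto
  have hnocross : ∀ e : HEdge n d, ω e = true →
      ¬((∃ x ∈ e.1, x ∈ S₀) ∧ ∃ y ∈ e.1, y ∉ S₀) := by
    rintro e hωe ⟨⟨x, hxe, hxS⟩, ⟨y, hye, hyS⟩⟩
    have hxy : x ≠ y := fun hxy => hyS (hxy ▸ hxS)
    have hadj : G.Adj x y := by
      rw [hG, SimpleGraph.fromRel_adj]
      refine ⟨hxy, Or.inl ?_⟩
      rw [adjCount, if_neg hxy]
      have : e ∈ Finset.univ.filter fun s : HEdge n d =>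
          ω s = true ∧ x ∈ s.1 ∧ y ∈ s.1 := by
        rw [Finset.mem_filter]; exact ⟨Finset.mem_univ _, hωe, hxe, hye⟩
      have hpos : 0 < (Finset.univ.filter fun s : HEdge n d =>
          ω s = true ∧ x ∈ s.1 ∧ y ∈ s.1).card := Finset.card_pos.mpr ⟨e, this⟩
      exact_mod_cast hpos
    apply hyS
    rw [hS₀, Finset.mem_filter] at hxS ⊢
    exact ⟨Finset.mem_univ _, hxS.2.trans hadj.reachable⟩
  by_cases hsize : 2 * S₀.card ≤ n
  · exact ⟨S₀, ⟨u, hu⟩, hsize, hnocross⟩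
  · refine ⟨S₀ᶜ, ⟨v, Finset.mem_compl.mpr hv⟩, ?_, ?_⟩
    · have h1 : S₀.card ≤ n := by simpa using Finset.card_le_univ S₀
      rw [Finset.card_compl, Fintype.card_fin]
      omega
    · intro e hωe ⟨⟨x, hxe, hxS⟩, ⟨y, hye, hyS⟩⟩
      rw [Finset.mem_compl] at hxS
      rw [Finset.mem_compl, not_not] at hyS
      exact hnocross e hωe ⟨⟨y, hye, hyS⟩, ⟨x, hxe, hxS⟩⟩


lemma filter_swap (ω : HEdge n d → Bool) (j : Fin n) :
    ((Finset.univ.filter fun e : HEdge n d => j ∈ e.1).filter fun e => ω e = true)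
      = Finset.univ.filter fun e : HEdge n d => ω e = true ∧ j ∈ e.1 := by
  rw [Finset.filter_filter]
  exact Finset.filter_congr (fun e _ => by tauto)

lemma ratio_bound (hn : 1 ≤ n) (ε δ m : ℝ) (x : Fin n → ℝ) (j : Fin n)
    (hδ0 : 0 < δ) (hδε : 3*δ ≤ ε) (hδ3 : δ ≤ 1/3) (hε1 : ε ≤ 1) (hm : 0 < m)
    (hlo : ∀ i, (1-δ)*m < x i) (hhi : ∀ i, x i < (1+δ)*m) :
    |(∑ i, x i) / x j - (n:ℝ)| ≤ ε * n := by
  have hxj : 0 < x j := lt_trans (by nlinarith) (hlo j)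
  have hsum_hi : ∑ i, x i ≤ (n:ℝ) * ((1+δ)*m) := by
    calc ∑ i, x i ≤ ∑ _i : Fin n, (1+δ)*m := Finset.sum_le_sum (fun i _ => (hhi i).le)
      _ = (n:ℝ) * ((1+δ)*m) := by rw [Finset.sum_const, Finset.card_univ, Fintype.card_fin,
            nsmul_eq_mul]
  have hsum_lo : (n:ℝ) * ((1-δ)*m) ≤ ∑ i, x i := by
    calc (n:ℝ) * ((1-δ)*m) = ∑ _i : Fin n, (1-δ)*m := by
          rw [Finset.sum_const, Finset.card_univ, Fintype.card_fin, nsmul_eq_mul]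
      _ ≤ ∑ i, x i := Finset.sum_le_sum (fun i _ => (hlo i).le)
  have hn' : (1:ℝ) ≤ n := by exact_mod_cast hn
  rw [abs_le]
  have hεn : (0:ℝ) ≤ ε * n := by nlinarith
  have hkey1 : 0 ≤ ε - 2*δ - ε*δ := by nlinarith
  have hkey2 : 0 ≤ ε + ε*δ - 2*δ := by nlinarith
  have hnm : (0:ℝ) ≤ (n:ℝ) * m := by positivity
  constructor
  · have hR : ((n:ℝ) - ε*n) * x j ≤ ∑ i, x i := by
      rcases le_or_gt ((n:ℝ) - ε*n) 0 with h | h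
      · refine le_trans (mul_nonpos_of_nonpos_of_nonneg h hxj.le) ?_
        refine le_trans ?_ hsum_lo
        nlinarith
      · refine le_trans (mul_le_mul_of_nonneg_left (hhi j).le h.le) ?_
        refine le_trans ?_ hsum_lo
        nlinarith [mul_nonneg hnm hkey2]
    have := (le_div_iff₀ hxj).mpr hR
    linarith
  · have hR : ∑ i, x i ≤ ((n:ℝ) + ε*n) * x j := by
      refine hsum_hi.trans ?_
      have h2 : ((n:ℝ) + ε*n) * ((1-δ)*m) ≤ ((n:ℝ) + ε*n) * x j :=
        mul_le_mul_of_nonneg_left (hlo j).le (by linarith)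
      refine le_trans ?_ h2
      nlinarith [mul_nonneg hnm hkey1]
    have := (div_le_iff₀ hxj).mpr hR
    linarith

lemma twoEdges_div (hd : 2 ≤ d) (ω : HEdge n d → Bool) (j : Fin n) :
    twoEdges n d ω / deg n d ω j
      = (∑ i, ((Finset.univ.filter fun e : HEdge n d => ω e = true ∧ i ∈ e.1).card : ℝ))
        / ((Finset.univ.filter fun e : HEdge n d => ω e = true ∧ j ∈ e.1).card : ℝ) := by
  have hd1 : (1:ℕ) ≤ d := by omega
  have hne : ((d:ℝ) - 1) ≠ 0 := by
    have : (2:ℝ) ≤ d := by exact_mod_cast hd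
    linarith
  rw [twoEdges]
  have : ∀ i : Fin n, deg n d ω i = ((d:ℝ) - 1) *
      ((Finset.univ.filter fun e : HEdge n d => ω e = true ∧ i ∈ e.1).card : ℝ) :=
    fun i => deg_eq hd1 ω i
  simp_rw [this, ← Finset.mul_sum]
  rw [mul_div_mul_left _ _ hne]


lemma sum_pow_card {α : Type*} [DecidableEq α] (x : ℝ) (S : Finset α) :
    ∑ T ∈ S.powerset, x ^ T.card = (x + 1) ^ S.card := by
  classical
  rw [← Finset.prod_const, Finset.prod_add]
  refine Finset.sum_congr rfl (fun T hT => ?_)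
  rw [Finset.prod_const, Finset.prod_const, one_pow, mul_one]

lemma disconn_bound (hd : 2 ≤ d) (hn : 1 ≤ n) (hp0 : 0 ≤ p) (hp1 : p ≤ 1) :
    hyperMeasure n d p hp1 {ω | ¬ HConn n d ω}
      ≤ ENNReal.ofReal
        (Real.exp ((n:ℝ) * Real.exp (-(p * ((n - n/2).choose (d-1) : ℕ)))) - 1) := by
  classical
  set M : ℕ := (n - n/2).choose (d-1) with hM
  set r : ℝ := Real.exp (-(p * M)) with hr
  have hr0 : 0 ≤ r := Real.exp_nonneg _
  set fam : Finset (Finset (Fin n)) :=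
    Finset.univ.powerset.filter (fun S : Finset (Fin n) => S.Nonempty ∧ 2*S.card ≤ n) with hfam
  set FS : Finset (Fin n) → Finset (HEdge n d) := fun S => Finset.univ.filter fun e =>
    (∃ v ∈ e.1, v ∈ S) ∧ ∃ v ∈ e.1, v ∉ S with hFS
  have hsub : {ω : HEdge n d → Bool | ¬ HConn n d ω}
      ⊆ ⋃ S ∈ fam, {ω | ∀ e ∈ FS S, ω e = false} := by
    intro ω hω
    obtain ⟨S, hS1, hS2, hS3⟩ := disconn_struct hn ω hω
    have hSf : S ∈ fam := by
      rw [hfam, Finset.mem_filter, Finset.mem_powerset]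
      exact ⟨Finset.subset_univ S, hS1, hS2⟩
    refine Set.mem_biUnion hSf ?_
    intro e he
    rw [hFS, Finset.mem_filter] at he
    rcases Bool.eq_false_or_eq_true (ω e) with h | h
    · exact absurd he.2 (hS3 e h)
    · exact h
  refine (measure_mono hsub).trans ((measure_biUnion_finset_le _ _).trans ?_)
  have hterm : ∀ S ∈ fam, hyperMeasure n d p hp1 {ω | ∀ e ∈ FS S, ω e = false}
      ≤ ENNReal.ofReal (r ^ S.card) := by
    intro S hSf
    rw [hfam, Finset.mem_filter, Finset.mem_powerset] at hSf
    rw [measure_allfalse hp0 hp1]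
    refine ENNReal.ofReal_le_ofReal ?_
    have c1 : S.card * (n - S.card).choose (d-1) ≤ (FS S).card := crossing_card hd S
    have c2 : M ≤ (n - S.card).choose (d-1) := by
      refine Nat.choose_le_choose _ ?_
      omega
    have c3 : S.card * M ≤ (FS S).card :=
      le_trans (Nat.mul_le_mul_left _ c2) c1
    calc (1-p) ^ (FS S).card ≤ (1-p) ^ (S.card * M) :=
          pow_le_pow_of_le_one (by linarith) (by linarith) c3
      _ = ((1-p) ^ M) ^ S.card := by rw [← pow_mul, mul_comm]
      _ ≤ r ^ S.card := by
          refine pow_le_pow_left₀ (pow_nonneg (by linarith) _) ?_ _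
          calc (1-p) ^ M ≤ (Real.exp (-p)) ^ M := by
                refine pow_le_pow_left₀ (by linarith) ?_ _
                have := Real.add_one_le_exp (-p); linarith
            _ = r := by rw [hr, ← Real.exp_nat_mul]; ring_nf
  refine (Finset.sum_le_sum hterm).trans ?_
  rw [← ENNReal.ofReal_sum_of_nonneg (fun S _ => pow_nonneg hr0 _)]
  refine ENNReal.ofReal_le_ofReal ?_
  have hsubfam : fam ⊆ Finset.univ.powerset.filter (fun S : Finset (Fin n) => S.Nonempty) := by
    intro S hS
    rw [hfam, Finset.mem_filter] at hS
    rw [Finset.mem_filter]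
    exact ⟨hS.1, hS.2.1⟩
  have h1 : ∑ S ∈ fam, r ^ S.card
      ≤ ∑ S ∈ Finset.univ.powerset.filter (fun S : Finset (Fin n) => S.Nonempty), r ^ S.card :=
    Finset.sum_le_sum_of_subset_of_nonneg hsubfam (fun S _ _ => pow_nonneg hr0 _)
  refine h1.trans ?_
  have h2 : ∑ S ∈ Finset.univ.powerset.filter (fun S : Finset (Fin n) => S.Nonempty), r ^ S.card
      = (r+1)^n - 1 := by
    have h3 := Finset.sum_filter_add_sum_filter_not (Finset.univ.powerset)
      (fun S : Finset (Fin n) => S.Nonempty) (fun S => r ^ S.card)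
    have h4 : Finset.univ.powerset.filter (fun S : Finset (Fin n) => ¬ S.Nonempty) = {∅} := by
      ext S
      simp [Finset.not_nonempty_iff_eq_empty]
    rw [h4] at h3
    rw [sum_pow_card] at h3
    simp only [Finset.sum_singleton, Finset.card_empty, pow_zero] at h3
    rw [Finset.card_univ, Fintype.card_fin] at h3
    linarith
  rw [h2]
  have h5 : (r+1)^n ≤ Real.exp ((n:ℝ) * r) := by
    calc (r+1)^n ≤ (Real.exp r)^n := by
          refine pow_le_pow_left₀ (by linarith) ?_ _
          linarith [Real.add_one_le_exp r]
      _ = Real.exp ((n:ℝ) * r) := by rw [← Real.exp_nat_mul]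
  linarith

lemma choose_lb (a k : ℕ) : ((a + 1 - k : ℕ) : ℝ) ^ k ≤ (k.factorial : ℝ) * (a.choose k : ℝ) := by
  exact_mod_cast le_of_le_of_eq (Nat.pow_sub_le_descFactorial a k)
    (Nat.descFactorial_eq_factorial_mul_choose a k)

lemma log_ge_one {n : ℕ} (hn : 3 ≤ n) : 1 ≤ Real.log n := by
  have hn0 : (0:ℝ) < n := by positivity
  rw [Real.le_log_iff_exp_le hn0]
  calc Real.exp 1 ≤ 2.7182818286 := Real.exp_one_lt_d9.le
    _ ≤ (n:ℝ) := by
        have : (3:ℝ) ≤ (n:ℝ) := by exact_mod_cast hn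
        linarith

lemma hkey {d : ℕ} {p : ℕ → ℝ}
    (hgrowth : Tendsto (fun n : ℕ => p n * (n:ℝ)^(d-1) / (Real.log n)^4) atTop atTop)
    {C : ℝ} (hC : 0 < C) :
    ∀ᶠ n : ℕ in atTop, C * Real.log n ≤ p n * (n:ℝ)^(d-1) := by
  filter_upwards [eventually_ge_atTop 3, hgrowth.eventually_ge_atTop C] with n h3 hC'
  have hl1 : 1 ≤ Real.log n := log_ge_one h3
  have hl4 : Real.log n ≤ (Real.log n)^4 := le_self_pow₀ (by linarith) (by norm_num)
  have hpos : (0:ℝ) < (Real.log n)^4 := by positivity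
  have h := (le_div_iff₀ hpos).mp hC'
  nlinarith [mul_le_mul_of_nonneg_left hl4 hC.le]

lemma isProb (n d : ℕ) (p : ℝ) (hp1 : p ≤ 1) :
    IsProbabilityMeasure (hyperMeasure n d p hp1) := by
  unfold hyperMeasure; infer_instance

lemma div_trick {K l a s m : ℝ} (hK : 0 < K) (hs : 0 < s) (h1 : a / K ≤ m)
    (h2 : (10*K/s) * l ≤ a) : 2 * l ≤ s * m / 5 := by
  have h1' : a ≤ m * K := (div_le_iff₀ hK).mp h1
  have h2' : 10*K*l ≤ s * a := by
    have h := mul_le_mul_of_nonneg_left h2 hs.le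
    have he : s * ((10*K/s) * l) = 10*K*l := by field_simp
    linarith [he ▸ h]
  nlinarith [mul_le_mul_of_nonneg_left h1' hs.le]

lemma main_small (d : ℕ) (hd : 2 ≤ d)
    (p : ℕ → ℝ) (hp0 : ∀ n, 0 ≤ p n) (hp1 : ∀ n, p n ≤ 1)
    (hgrowth : Tendsto
      (fun n => p n * (n : ℝ) ^ (d - 1) / (Real.log n) ^ 4) atTop atTop)
    (ε : ℝ) (hε0 : 0 < ε) (hε1 : ε ≤ 1) :
    Tendsto (fun n => hyperMeasure n d (p n) (hp1 n)
      {ω : HEdge n d → Bool | HConn n d ω ∧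
        ∀ j : Fin n, |twoEdges n d ω / deg n d ω j - (n : ℝ)| ≤ ε * n})
      atTop (nhds 1) := by
  classical
  have hd1 : 1 ≤ d := by omega
  set δ : ℝ := ε/3 with hδ
  have hδ0 : 0 < δ := by rw [hδ]; linarith
  have hδ3 : δ ≤ 1/3 := by rw [hδ]; linarith
  have hδ2 : δ ≤ 1/2 := by linarith
  have hδε : 3*δ ≤ ε := by rw [hδ]; linarith
  set Kfac : ℝ := ((d-1).factorial : ℝ) with hKfac
  have hKfac0 : (0:ℝ) < Kfac := by
    rw [hKfac]; exact_mod_cast (d-1).factorial_pos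
  set K : ℝ := Kfac * 2^(d-1) with hK
  set K' : ℝ := Kfac * 16^(d-1) with hK'
  have hK0 : 0 < K := by rw [hK]; positivity
  have hK'0 : 0 < K' := by rw [hK']; positivity
  set N : ℕ → ℕ := fun n => (n-1).choose (d-1) with hN
  set M : ℕ → ℕ := fun n => (n - n/2).choose (d-1) with hM
  set m : ℕ → ℝ := fun n => (N n : ℝ) * p n with hm
  set B : ℕ → ℝ := fun n =>
    (Real.exp ((n:ℝ) * Real.exp (-(p n * M n))) - 1)
      + 2 * n * Real.exp (-(δ^2 * m n / 5)) with hB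
  have hF : ∀ᶠ n : ℕ in atTop,
      2 * Real.log n ≤ p n * M n ∧ 2 * Real.log n ≤ δ^2 * m n / 5 ∧ 0 < m n := by
    have hc1 : (0:ℝ) < 2*K' := by positivity
    have hc2 : (0:ℝ) < 10*K/δ^2 := by positivity
    filter_upwards [hkey hgrowth hc1, hkey hgrowth hc2, eventually_ge_atTop (16*d+16),
      eventually_ge_atTop 3] with n h1 h2 hn h3
    have hl1 : 1 ≤ Real.log n := log_ge_one h3
    have hnR : (0:ℝ) < n := by
      have : 0 < n := by omega
      exact_mod_cast this
    have hNb : (n:ℝ)^(d-1) / K ≤ (N n : ℝ) := by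
      have hcb := choose_lb (n-1) (d-1)
      have ht : (n:ℝ) ≤ 2 * ((n-1+1-(d-1):ℕ):ℝ) := by
        have h : n ≤ 2 * (n-1+1-(d-1)) := by omega
        exact_mod_cast h
      have hpow : ((n:ℝ)/2)^(d-1) ≤ ((n-1+1-(d-1):ℕ):ℝ)^(d-1) :=
        pow_le_pow_left₀ (by positivity) (by linarith) _
      have hch : ((n:ℝ)/2)^(d-1) ≤ Kfac * N n := le_trans hpow hcb
      rw [div_pow, div_le_iff₀ (by positivity : (0:ℝ) < (2:ℝ)^(d-1))] at hch
      rw [div_le_iff₀ hK0]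
      calc (n:ℝ)^(d-1) ≤ Kfac * N n * 2^(d-1) := hch
        _ = N n * K := by rw [hK]; ring
    have hMb : (n:ℝ)^(d-1) / K' ≤ (M n : ℝ) := by
      have hcb := choose_lb (n - n/2) (d-1)
      have ht : (n:ℝ) ≤ 16 * ((n - n/2 + 1 - (d-1):ℕ):ℝ) := by
        have h : n ≤ 16 * (n - n/2 + 1 - (d-1)) := by omega
        exact_mod_cast h
      have hpow : ((n:ℝ)/16)^(d-1) ≤ ((n - n/2 + 1 - (d-1):ℕ):ℝ)^(d-1) :=
        pow_le_pow_left₀ (by positivity) (by linarith) _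
      have hch : ((n:ℝ)/16)^(d-1) ≤ Kfac * M n := le_trans hpow hcb
      rw [div_pow, div_le_iff₀ (by positivity : (0:ℝ) < (16:ℝ)^(d-1))] at hch
      rw [div_le_iff₀ hK'0]
      calc (n:ℝ)^(d-1) ≤ Kfac * M n * 16^(d-1) := hch
        _ = M n * K' := by rw [hK']; ring
    have hmlow : (p n * (n:ℝ)^(d-1)) / K ≤ m n := by
      have h4 := mul_le_mul_of_nonneg_right hNb (hp0 n)
      calc (p n * (n:ℝ)^(d-1)) / K = (n:ℝ)^(d-1)/K * p n := by ring
        _ ≤ (N n : ℝ) * p n := h4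
        _ = m n := by rw [hm]
    refine ⟨?_, ?_, ?_⟩
    · have h4 : p n * ((n:ℝ)^(d-1)/K') ≤ p n * M n :=
        mul_le_mul_of_nonneg_left hMb (hp0 n)
      have h6 : 2 * Real.log n ≤ p n * (n:ℝ)^(d-1) / K' := by
        rw [le_div_iff₀ hK'0]; nlinarith
      calc 2*Real.log n ≤ p n * (n:ℝ)^(d-1)/K' := h6
        _ = p n * ((n:ℝ)^(d-1)/K') := by ring
        _ ≤ p n * M n := h4
    · exact div_trick hK0 (by positivity : (0:ℝ) < δ^2) hmlow h2
    · have h7 : 0 < p n * (n:ℝ)^(d-1) := by nlinarith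
      exact lt_of_lt_of_le (by positivity : (0:ℝ) < p n * (n:ℝ)^(d-1) / K) hmlow
  have hMeas : ∀ᶠ n : ℕ in atTop,
      1 - ENNReal.ofReal (B n) ≤ hyperMeasure n d (p n) (hp1 n)
        {ω : HEdge n d → Bool | HConn n d ω ∧
          ∀ j : Fin n, |twoEdges n d ω / deg n d ω j - (n : ℝ)| ≤ ε * n} := by
    filter_upwards [hF, eventually_ge_atTop 1] with n hFn hn1
    obtain ⟨hf1, hf2, hm_pos⟩ := hFn
    haveI := isProb n d (p n) (hp1 n)
    set μn := hyperMeasure n d (p n) (hp1 n) with hμn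
    set Ej : Fin n → Finset (HEdge n d) :=
      (fun j => Finset.univ.filter fun e : HEdge n d => j ∈ e.1) with hEj
    have hEcard : ∀ j, (Ej j).card = N n := fun j => card_edges_mem hd1 j
    set U : Fin n → Set (HEdge n d → Bool) := (fun j =>
      {ω | (1+δ) * ((Ej j).card * p n) ≤ (((Ej j).filter fun e => ω e = true).card : ℝ)} ∪
      {ω | ((((Ej j).filter fun e => ω e = true).card : ℝ)) ≤ (1-δ) * ((Ej j).card * p n)})
      with hU
    set G : Set (HEdge n d → Bool) := {ω | HConn n d ω} ∩ ⋂ j : Fin n, (U j)ᶜ with hG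
    have hGsub : G ⊆ {ω : HEdge n d → Bool | HConn n d ω ∧
        ∀ j : Fin n, |twoEdges n d ω / deg n d ω j - (n:ℝ)| ≤ ε*n} := by
      rintro ω ⟨hconn, hgood⟩
      refine ⟨hconn, fun j => ?_⟩
      rw [twoEdges_div hd ω j]
      have hx : ∀ i : Fin n,
          (1-δ) * m n < ((Finset.univ.filter
              fun e : HEdge n d => ω e = true ∧ i ∈ e.1).card : ℝ)
          ∧ ((Finset.univ.filter
              fun e : HEdge n d => ω e = true ∧ i ∈ e.1).card : ℝ) < (1+δ) * m n := by
        intro i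
        have hgi := Set.mem_iInter.mp hgood i
        rw [hU] at hgi
        simp only [Set.mem_compl_iff, Set.mem_union, Set.mem_setOf_eq, not_or, not_le] at hgi
        have hcc : ((Ej i).card : ℝ) * p n = m n := by rw [hEcard i, hm]
        rw [← filter_swap ω i]
        rw [hcc] at hgi
        exact ⟨hgi.2, hgi.1⟩
      exact ratio_bound hn1 ε δ (m n) _ j hδ0 hδε hδ3 hε1 hm_pos
        (fun i => (hx i).1) (fun i => (hx i).2)
    have hGc : μn Gᶜ ≤ ENNReal.ofReal (B n) := by
      rw [hG, Set.compl_inter, Set.compl_iInter]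
      simp only [compl_compl]
      refine (measure_union_le _ _).trans ?_
      have hA : μn {ω : HEdge n d → Bool | HConn n d ω}ᶜ
          ≤ ENNReal.ofReal (Real.exp ((n:ℝ) * Real.exp (-(p n * M n))) - 1) := by
        have hcompl : {ω : HEdge n d → Bool | HConn n d ω}ᶜ = {ω | ¬ HConn n d ω} := by
          ext ω; simp
        rw [hcompl, hμn]
        exact disconn_bound hd hn1 (hp0 n) (hp1 n)
      have hUj : μn (⋃ j, U j) ≤ ENNReal.ofReal (2 * n * Real.exp (-(δ^2 * m n / 5))) := by
        have he : (⋃ j, U j) = ⋃ j ∈ Finset.univ, U j := by simp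
        rw [he]
        refine (measure_biUnion_finset_le _ _).trans ?_
        have hj : ∀ j : Fin n, μn (U j) ≤ ENNReal.ofReal (2 * Real.exp (-(δ^2 * m n / 5))) := by
          intro j
          rw [hU]
          refine (measure_union_le _ _).trans ?_
          have h1' := measure_upper (hp0 n) (hp1 n) (Ej j) δ hδ0 hδ2
          have h2' := measure_lower (hp0 n) (hp1 n) (Ej j) δ hδ0 hδ2
          have hcc : ((Ej j).card : ℝ) * p n = m n := by rw [hEcard j, hm]
          have h1'' := h1'.trans (le_of_eq (by rw [hcc]) :
            ENNReal.ofReal (Real.exp (-(δ^2 * (((Ej j).card : ℝ) * p n) / 5)))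
              ≤ ENNReal.ofReal (Real.exp (-(δ^2 * m n / 5))))
          have h2'' := h2'.trans (le_of_eq (by rw [hcc]) :
            ENNReal.ofReal (Real.exp (-(δ^2 * (((Ej j).card : ℝ) * p n) / 5)))
              ≤ ENNReal.ofReal (Real.exp (-(δ^2 * m n / 5))))
          refine (add_le_add h1'' h2'').trans ?_
          rw [← ENNReal.ofReal_add (Real.exp_nonneg _) (Real.exp_nonneg _)]
          exact ENNReal.ofReal_le_ofReal (le_of_eq (by ring))
        calc ∑ j : Fin n, μn (U j)
            ≤ ∑ _j : Fin n, ENNReal.ofReal (2 * Real.exp (-(δ^2 * m n / 5))) :=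
              Finset.sum_le_sum (fun j _ => hj j)
          _ = (n : ENNReal) * ENNReal.ofReal (2 * Real.exp (-(δ^2 * m n / 5))) := by
              rw [Finset.sum_const, Finset.card_univ, Fintype.card_fin, nsmul_eq_mul]
          _ = ENNReal.ofReal (2 * n * Real.exp (-(δ^2 * m n / 5))) := by
              rw [← ENNReal.ofReal_natCast n,
                ← ENNReal.ofReal_mul (Nat.cast_nonneg n)]
              congr 1; ring
      have hnn1 : (0:ℝ) ≤ Real.exp ((n:ℝ) * Real.exp (-(p n * M n))) - 1 := by
        have h1 : (0:ℝ) ≤ (n:ℝ) * Real.exp (-(p n * M n)) := by positivity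
        linarith [Real.add_one_le_exp ((n:ℝ) * Real.exp (-(p n * M n)))]
      have hnn2 : (0:ℝ) ≤ 2 * (n:ℝ) * Real.exp (-(δ^2 * m n / 5)) := by positivity
      refine (add_le_add hA hUj).trans (le_of_eq ?_)
      rw [hB, ← ENNReal.ofReal_add hnn1 hnn2]
    have hGm : μn G = 1 - μn Gᶜ := by
      have h := prob_compl_eq_one_sub (μ := μn) (s := Gᶜ) MeasurableSet.of_discrete
      rwa [compl_compl] at h
    calc 1 - ENNReal.ofReal (B n) ≤ 1 - μn Gᶜ := tsub_le_tsub_left hGc 1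
      _ = μn G := hGm.symm
      _ ≤ _ := measure_mono hGsub
  have hBto : Tendsto B atTop (nhds 0) := by
    have hb : ∀ᶠ n : ℕ in atTop, B n ≤ (Real.exp ((n:ℝ)⁻¹) - 1) + 2 * (n:ℝ)⁻¹ := by
      filter_upwards [hF, eventually_ge_atTop 1] with n hFn hn1
      obtain ⟨hf1, hf2, hm_pos⟩ := hFn
      have hnR : (1:ℝ) ≤ n := by exact_mod_cast hn1
      have hexp2 : Real.exp (-(2*Real.log n)) = (((n:ℝ)^2))⁻¹ := by
        rw [show (2:ℝ)*Real.log n = Real.log ((n:ℝ)^2) by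
          rw [Real.log_pow]; norm_num, Real.exp_neg, Real.exp_log (by positivity)]
      have hinv : (n:ℝ) * (((n:ℝ)^2))⁻¹ = (n:ℝ)⁻¹ := by
        have hne : (n:ℝ) ≠ 0 := by linarith
        field_simp
      have hp1' : (n:ℝ) * Real.exp (-(p n * M n)) ≤ (n:ℝ)⁻¹ := by
        calc (n:ℝ) * Real.exp (-(p n * M n)) ≤ (n:ℝ) * Real.exp (-(2*Real.log n)) := by
              refine mul_le_mul_of_nonneg_left (Real.exp_le_exp.mpr (by linarith)) (by linarith)
          _ = (n:ℝ)⁻¹ := by rw [hexp2, hinv]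
      have hp2' : 2 * (n:ℝ) * Real.exp (-(δ^2 * m n / 5)) ≤ 2 * (n:ℝ)⁻¹ := by
        calc 2 * (n:ℝ) * Real.exp (-(δ^2 * m n / 5))
            ≤ 2 * (n:ℝ) * Real.exp (-(2*Real.log n)) := by
              refine mul_le_mul_of_nonneg_left (Real.exp_le_exp.mpr (by linarith)) (by linarith)
          _ = 2 * (n:ℝ)⁻¹ := by rw [hexp2]; rw [mul_assoc, hinv]
      rw [hB]
      have e1 : Real.exp ((n:ℝ) * Real.exp (-(p n * M n))) ≤ Real.exp ((n:ℝ)⁻¹) :=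
        Real.exp_le_exp.mpr hp1'
      linarith
    have hb0 : ∀ᶠ n : ℕ in atTop, 0 ≤ B n := by
      filter_upwards [] with n
      rw [hB]
      have h1 : (0:ℝ) ≤ (n:ℝ) * Real.exp (-(p n * M n)) := by positivity
      have h2 := Real.add_one_le_exp ((n:ℝ) * Real.exp (-(p n * M n)))
      have h3 : (0:ℝ) ≤ 2 * (n:ℝ) * Real.exp (-(δ^2 * m n / 5)) := by positivity
      linarith
    have hrhs : Tendsto (fun n : ℕ => (Real.exp ((n:ℝ)⁻¹) - 1) + 2 * (n:ℝ)⁻¹)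
        atTop (nhds 0) := by
      have t1 : Tendsto (fun n : ℕ => ((n:ℝ))⁻¹) atTop (nhds 0) :=
        tendsto_inv_atTop_nhds_zero_nat
      have t2 : Tendsto (fun n : ℕ => Real.exp ((n:ℝ)⁻¹) - 1) atTop (nhds 0) := by
        have h := ((Real.continuous_exp.tendsto 0).comp t1).sub_const 1
        simpa using h
      have t3 := t2.add (t1.const_mul 2)
      simpa [mul_comm] using t3
    exact tendsto_of_tendsto_of_tendsto_of_le_of_le' tendsto_const_nhds hrhs hb0 hb
  have hlow : Tendsto (fun n : ℕ => 1 - ENNReal.ofReal (B n)) atTop (nhds 1) := by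
    have h1 : Tendsto (fun n : ℕ => ENNReal.ofReal (B n)) atTop (nhds 0) := by
      have h := ENNReal.tendsto_ofReal hBto
      simpa using h
    have h2 := ((ENNReal.continuous_sub_left (a := 1) ENNReal.one_ne_top).tendsto 0).comp h1
    simpa [Function.comp_def] using h2
  refine tendsto_of_tendsto_of_tendsto_of_le_of_le' hlow tendsto_const_nhds hMeas ?_
  filter_upwards [] with n
  haveI := isProb n d (p n) (hp1 n)
  exact prob_le_one

end S15

/-- a.a.s., simultaneously for all vertices j, 2|Ẽ|/d_j = n(1+o(1)): for every ε > 0, the probability that the hypergraph is connected and max_j |2|Ẽ|/d_j − n| ≤ εn tends to 1. -/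
theorem stmt_15
    (d : ℕ) (hd : 2 ≤ d)
    (p : ℕ → ℝ) (hp0 : ∀ n, 0 ≤ p n) (hp1 : ∀ n, p n ≤ 1)
    (hgrowth : Tendsto
      (fun n => p n * (n : ℝ) ^ (d - 1) / (Real.log n) ^ 4) atTop atTop) :
    ∀ ε : ℝ, 0 < ε →
    Tendsto (fun n => hyperMeasure n d (p n) (hp1 n)
      {ω : HEdge n d → Bool | HConn n d ω ∧
        ∀ j : Fin n, |twoEdges n d ω / deg n d ω j - (n : ℝ)| ≤ ε * n})
      atTop (nhds 1) := by
  intro ε hε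
  rcases le_or_gt ε 1 with h | h
  · exact S15.main_small d hd p hp0 hp1 hgrowth ε hε h
  · have h1 := S15.main_small d hd p hp0 hp1 hgrowth 1 one_pos le_rfl
    refine tendsto_of_tendsto_of_tendsto_of_le_of_le' h1 tendsto_const_nhds ?_ ?_
    · filter_upwards [] with n
      refine measure_mono ?_
      rintro ω ⟨hc, hj⟩
      refine ⟨hc, fun j => ?_⟩
      refine (hj j).trans ?_
      have hn0 : (0:ℝ) ≤ n := Nat.cast_nonneg n
      nlinarith
    · filter_upwards [] with n
      haveI := S15.isProb n d (p n) (hp1 n)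
      exact prob_le_one
end
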